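/- Let −1 < n < 1, write n = −1 + δ with 0 < δ < 2, and let m be a minimizer for f_L(n) that is not constant. Then max_Ω m ≥ 1 − δ − 2√δ·√(1 − δ/2). -/

import Mathlib

open MeasureTheory Filter

noncomputable section

/-- The double-well potential `F(m) = (1/4)(m²-1)²`. -/
def Fpot (m : ℝ) : ℝ := (1/4) * (m^2 - 1)^2

/-- The fundamental domain `[0,L)^d` of the torus of side `L`. -/
def box (d : ℕ) (L : ℝ) : Set (EuclideanSpace ℝ (Fin d)) :=
  {x | ∀ i, x i ∈ Set.Ico (0:ℝ) L}

/-- `L`-periodicity in each coordinate direction. -/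
def PeriodicOn (d : ℕ) (L : ℝ) (m : EuclideanSpace ℝ (Fin d) → ℝ) : Prop :=
  ∀ (x : EuclideanSpace ℝ (Fin d)) (i : Fin d),
    m (x + L • EuclideanSpace.single i (1:ℝ)) = m x

/-- The Cahn--Hilliard free energy functional on the torus. -/
def FE (d : ℕ) (L : ℝ) (m : EuclideanSpace ℝ (Fin d) → ℝ) : ℝ :=
  ∫ x in box d L, ((1/2) * ‖fderiv ℝ m x‖^2 + Fpot (m x))

/-- Admissible order parameter fields with mean `n`. -/
def Adm (d : ℕ) (L n : ℝ) (m : EuclideanSpace ℝ (Fin d) → ℝ) : Prop :=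
  ContDiff ℝ 1 m ∧ PeriodicOn d L m ∧ (1/L^d) * (∫ x in box d L, m x) = n

/-- The minimal free energy `f_L(n)`. -/
def fL (d : ℕ) (L n : ℝ) : ℝ :=
  sInf {e | ∃ m, Adm d L n m ∧ FE d L m = e}

/-- A minimizer for `f_L(n)`. -/
def IsMinimizer (d : ℕ) (L n : ℝ) (m : EuclideanSpace ℝ (Fin d) → ℝ) : Prop :=
  Adm d L n m ∧ FE d L m = fL d L n

/-- `σ_d`, the surface measure of the unit sphere in `ℝ^d`. -/
def sigma_d (d : ℕ) : ℝ :=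
  d * (volume (Metric.ball (0 : EuclideanSpace ℝ (Fin d)) 1)).toReal

/-- The planar surface tension `S = 2^{3/2}/3`. -/
def Sconst : ℝ := (2:ℝ) ^ ((3:ℝ)/2) / 3

/-- The compressibility `χ = 1/2`. -/
def chiConst : ℝ := 1/2

/-- The equimolar radius `r_0`. -/
def r0 (d : ℕ) (L n : ℝ) : ℝ := ((d / (2 * sigma_d d)) * (n+1)) ^ ((1:ℝ)/d) * L

/-- `|Γ_0| = σ_d r_0^{d-1}`. -/
def Gamma0 (d : ℕ) (L n : ℝ) : ℝ := sigma_d d * (r0 d L n)^(d-1)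

/-- `C(n)`. -/
def Cn (d : ℕ) (L n : ℝ) : ℝ :=
  (sigma_d d / (2 * chiConst * Sconst)) * (2/(d:ℝ))^2 * ((r0 d L n)^(d+1) / L^d)

/-- `D(K)`. -/
def Dconst (d : ℕ) (K : ℝ) : ℝ :=
  (2 / (d * chiConst * Sconst)) * (sigma_d d / d) ^ (-(1:ℝ)/d) * (K/2) ^ (((d:ℝ)+1)/d)

/-- `K_star`. -/
def Kstar (d : ℕ) : ℝ :=
  ((d:ℝ)+1) * (sigma_d d / d) ^ ((1:ℝ)/((d:ℝ)+1)) * (chiConst * Sconst / 2) ^ ((d:ℝ)/((d:ℝ)+1))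

/-- Torus distance. -/
def torusDist (d : ℕ) (L : ℝ) (x y : EuclideanSpace ℝ (Fin d)) : ℝ :=
  ⨅ k : Fin d → ℤ, dist x (y + (show EuclideanSpace ℝ (Fin d) from WithLp.toLp 2 (fun i => L * (k i : ℝ))))

-- auxiliary lemmas

theorem volume_boxlike (d : ℕ) (a b : Fin d → ℝ) :
    volume {x : EuclideanSpace ℝ (Fin d) | ∀ i, x i ∈ Set.Ico (a i) (b i)}
      = ∏ i, ENNReal.ofReal (b i - a i) := by
  have h := (EuclideanSpace.volume_preserving_symm_measurableEquiv_toLp (Fin d)).measure_preimage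
    (s := Set.univ.pi fun i => Set.Ico (a i) (b i))
    (MeasurableSet.univ_pi fun i => measurableSet_Ico).nullMeasurableSet
  have he : (⇑(MeasurableEquiv.toLp 2 (Fin d → ℝ)).symm ⁻¹' Set.univ.pi fun i => Set.Ico (a i) (b i))
      = {x : EuclideanSpace ℝ (Fin d) | ∀ i, x i ∈ Set.Ico (a i) (b i)} := by
    ext x
    simp [Set.mem_univ_pi]
  rw [he] at h
  rw [h, volume_pi_pi]
  simp [Real.volume_Ico]

theorem measurable_box (d : ℕ) (L : ℝ) : MeasurableSet (box d L) := by
  have : box d L = ⋂ i, (fun x : EuclideanSpace ℝ (Fin d) => x i) ⁻¹' Set.Ico 0 L := by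
    ext x; simp [box, Set.mem_iInter]
  rw [this]
  exact MeasurableSet.iInter fun i => ((measurable_pi_apply i).comp (MeasurableEquiv.toLp 2 (Fin d → ℝ)).symm.measurable) measurableSet_Ico

theorem compact_closedBox (d : ℕ) (L : ℝ) :
    IsCompact {x : EuclideanSpace ℝ (Fin d) | ∀ i, x i ∈ Set.Icc (0:ℝ) L} := by
  have h : {x : EuclideanSpace ℝ (Fin d) | ∀ i, x i ∈ Set.Icc (0:ℝ) L}
      = WithLp.toLp 2 '' Set.univ.pi (fun _ : Fin d => Set.Icc (0:ℝ) L) := by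
    ext x
    constructor
    · intro hx; exact ⟨x.ofLp, Set.mem_univ_pi.2 hx, rfl⟩
    · rintro ⟨y, hy, rfl⟩; exact Set.mem_univ_pi.1 hy
  rw [h]
  exact (isCompact_univ_pi fun i => isCompact_Icc).image (PiLp.continuous_toLp _ _)

theorem volume_box (d : ℕ) {L : ℝ} (hL : 0 < L) :
    volume (box d L) = ENNReal.ofReal L ^ d := by
  have := volume_boxlike d (fun _ => 0) (fun _ => L)
  simpa [box] using this

theorem integrableOn_box {d : ℕ} {L : ℝ} {g : EuclideanSpace ℝ (Fin d) → ℝ}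
    (hg : Continuous g) : IntegrableOn g (box d L) volume := by
  apply IntegrableOn.mono_set
    (hg.continuousOn.integrableOn_compact (compact_closedBox d L))
  intro x hx
  exact fun i => ⟨(hx i).1, (hx i).2.le⟩

lemma periodic_single_int {d : ℕ} {L : ℝ} {m : EuclideanSpace ℝ (Fin d) → ℝ}
    (hm : PeriodicOn d L m) (j : ℤ) (i : Fin d) (x : EuclideanSpace ℝ (Fin d)) :
    m (x + (j : ℝ) • (L • EuclideanSpace.single i (1:ℝ))) = m x := by
  set v := L • EuclideanSpace.single i (1:ℝ) with hv
  have hpos : ∀ (k : ℕ) (y : EuclideanSpace ℝ (Fin d)), m (y + (k : ℝ) • v) = m y := by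
    intro k
    induction k with
    | zero => intro y; simp
    | succ k ih =>
        intro y
        have : y + ((k : ℝ) + 1) • v = (y + (k : ℝ) • v) + v := by module
        push_cast
        rw [this, hv, hm, ih]
  have hneg : ∀ (k : ℕ) (y : EuclideanSpace ℝ (Fin d)), m (y - (k : ℝ) • v) = m y := by
    intro k
    induction k with
    | zero => intro y; simp
    | succ k ih =>
        intro y
        have h2 := hm (y - ((k : ℝ) + 1) • v) i
        rw [← hv] at h2
        have h3 : (y - ((k : ℝ) + 1) • v) + v = y - (k : ℝ) • v := by module
        rw [h3] at h2
        push_cast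
        rw [← h2, ih]
  rcases le_or_gt 0 j with hj | hj
  · lift j to ℕ using hj
    exact_mod_cast hpos j x
  · have hj' : 0 ≤ -j := by omega
    lift -j to ℕ using hj' with k hk
    have hcast : (j : ℝ) = -(k : ℝ) := by
      have := congrArg (fun z : ℤ => (z : ℝ)) hk
      push_cast at this
      linarith
    have : (j : ℝ) • v = - ((k : ℝ) • v) := by rw [hcast]; module
    rw [this]
    have := hneg k x
    rw [sub_eq_add_neg] at this
    exact this

lemma periodic_shift {d : ℕ} {L : ℝ} {m : EuclideanSpace ℝ (Fin d) → ℝ}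
    (hm : PeriodicOn d L m) (x : EuclideanSpace ℝ (Fin d)) (k : Fin d → ℤ) :
    m (x + (show EuclideanSpace ℝ (Fin d) from WithLp.toLp 2 (fun i => L * (k i : ℝ)))) = m x := by
  have key : ∀ s : Finset (Fin d),
      m (x + ∑ i ∈ s, (k i : ℝ) • (L • EuclideanSpace.single i (1:ℝ))) = m x := by
    intro s
    induction s using Finset.induction_on with
    | empty => simp
    | insert a s' hni ih =>
        rw [Finset.sum_insert hni]
        have : x + ((k a : ℝ) • (L • EuclideanSpace.single a (1:ℝ))
            + ∑ i ∈ s', (k i : ℝ) • (L • EuclideanSpace.single i (1:ℝ)))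
            = (x + ∑ i ∈ s', (k i : ℝ) • (L • EuclideanSpace.single i (1:ℝ)))
              + (k a : ℝ) • (L • EuclideanSpace.single a (1:ℝ)) := by module
        rw [this, periodic_single_int hm (k a), ih]
  have hfun : (show EuclideanSpace ℝ (Fin d) from WithLp.toLp 2 (fun i => L * (k i : ℝ)))
      = ∑ i, (k i : ℝ) • (L • EuclideanSpace.single i (1:ℝ)) := by
    ext j
    rw [WithLp.ofLp_sum, Finset.sum_apply]
    simp only [PiLp.smul_apply, EuclideanSpace.single_apply, smul_eq_mul, mul_ite, mul_one,
      mul_zero]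
    rw [Finset.sum_ite_eq Finset.univ j]
    simp [mul_comm]
  rw [hfun]
  exact key Finset.univ

lemma reduce_to_box {d : ℕ} {L : ℝ} (hL : 0 < L) {m : EuclideanSpace ℝ (Fin d) → ℝ}
    (hm : PeriodicOn d L m) (z : EuclideanSpace ℝ (Fin d)) :
    ∃ x ∈ box d L, m x = m z := by
  set k : Fin d → ℤ := fun i => ⌊z i / L⌋ with hk
  set x : EuclideanSpace ℝ (Fin d) := WithLp.toLp 2 (fun i => L * Int.fract (z i / L)) with hx
  refine ⟨x, ?_, ?_⟩
  · intro i
    refine ⟨mul_nonneg hL.le (Int.fract_nonneg _), ?_⟩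
    have h1 := Int.fract_lt_one (z i / L)
    calc L * Int.fract (z i / L) < L * 1 := by
            exact mul_lt_mul_of_pos_left h1 hL
      _ = L := mul_one L
  · have hz : z = x + (show EuclideanSpace ℝ (Fin d) from WithLp.toLp 2 (fun i => L * (k i : ℝ))) := by
      ext i
      show z i = L * Int.fract (z i / L) + L * (k i : ℝ)
      rw [Int.fract]
      field_simp
      simp only [hk]; ring
    rw [hz, periodic_shift hm]

set_option maxHeartbeats 2000000 in
/-- Lemma 3.2: if `n = -1 + δ` with `0 < δ < 2` and `m` is a nonconstant minimizer for
`f_L(n)`, then `max m ≥ 1 - δ - 2√δ √(1 - δ/2)`. -/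
theorem nonconstant_minimizer_max_lower_bound (d : ℕ) (hd : 2 ≤ d) (L : ℝ) (hL : 0 < L)
    (n δ : ℝ) (hn : n = -1 + δ) (hδ0 : 0 < δ) (hδ2 : δ < 2)
    (m : EuclideanSpace ℝ (Fin d) → ℝ) (hmin : IsMinimizer d L n m)
    (hnc : ¬ ∀ x y, m x = m y) :
    1 - δ - 2 * Real.sqrt δ * Real.sqrt (1 - δ/2) ≤ sSup (m '' box d L) := by
  by_contra hcon
  push_neg at hcon
  obtain ⟨⟨hC1, hper, hmean⟩, hFEmin⟩ := hmin
  set t : ℝ := 1 - δ - 2 * Real.sqrt δ * Real.sqrt (1 - δ/2) with ht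
  have hLd : (0:ℝ) < L ^ d := pow_pos hL d
  have hVolR : (volume (box d L)).toReal = L ^ d := by
    rw [volume_box d hL, ENNReal.toReal_pow, ENNReal.toReal_ofReal hL.le]
  have hconst_int : ∀ c : ℝ, (∫ _x in box d L, c) = L ^ d * c := by
    intro c
    rw [setIntegral_const, measureReal_def, hVolR, smul_eq_mul]
  -- w and the pointwise convexity estimates
  set w : ℝ := 2 * Real.sqrt δ * Real.sqrt (1 - δ/2) with hwdef
  have hw0 : 0 ≤ w := by positivity
  have hw2 : w ^ 2 = 2 - 2 * n ^ 2 := by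
    have h1 : Real.sqrt δ ^ 2 = δ := Real.sq_sqrt hδ0.le
    have h2 : Real.sqrt (1 - δ/2) ^ 2 = 1 - δ/2 := Real.sq_sqrt (by linarith)
    rw [hn, hwdef]
    nlinarith [h1, h2]
  have htn : t = -n - w := by rw [ht, hn, hwdef]; ring
  set a : ℝ := n^3 - n with ha
  have hGkey : ∀ s : ℝ, Fpot s - Fpot n - a * (s - n)
      = (1/4) * (s - n)^2 * ((s + n)^2 - w^2) := by
    intro s
    rw [hw2]
    unfold Fpot
    rw [ha]
    ring
  have hGpos : ∀ s : ℝ, s < t → 0 ≤ Fpot s - Fpot n - a * (s - n) := by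
    intro s hs
    rw [hGkey s]
    have hsn : s + n < -w := by rw [htn] at hs; linarith
    have hfac : 0 < (s + n) ^ 2 - w ^ 2 := by
      nlinarith [mul_pos (show (0:ℝ) < -(s+n+w) by linarith) (show (0:ℝ) < -(s+n-w) by linarith)]
    have := sq_nonneg (s - n)
    nlinarith
  have hGstrict : ∀ s : ℝ, s < t → s ≠ n → 0 < Fpot s - Fpot n - a * (s - n) := by
    intro s hs hne
    rw [hGkey s]
    have hsn : s + n < -w := by rw [htn] at hs; linarith
    have h2 : 0 < (s - n)^2 :=
      (sq_nonneg (s - n)).lt_of_ne (Ne.symm (pow_ne_zero 2 (sub_ne_zero.mpr hne)))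
    have hfac : 0 < (s + n) ^ 2 - w ^ 2 := by
      nlinarith [mul_pos (show (0:ℝ) < -(s+n+w) by linarith) (show (0:ℝ) < -(s+n-w) by linarith)]
    nlinarith
  -- m < t on box
  have hKsub : box d L ⊆ {x : EuclideanSpace ℝ (Fin d) | ∀ i, x i ∈ Set.Icc (0:ℝ) L} :=
    fun x hx i => ⟨(hx i).1, (hx i).2.le⟩
  have hbdd : BddAbove (m '' box d L) := by
    have hK := (compact_closedBox d L).image_of_continuousOn hC1.continuous.continuousOn
    exact hK.bddAbove.mono (Set.image_mono hKsub)
  have hlt : ∀ x ∈ box d L, m x < t := fun x hx =>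
    lt_of_le_of_lt (le_csSup hbdd (Set.mem_image_of_mem m hx)) hcon
  -- a point in box where m ≠ n
  push_neg at hnc
  obtain ⟨p, q, hpq⟩ := hnc
  obtain ⟨p', hp'box, hp'⟩ := reduce_to_box hL hper p
  obtain ⟨q', hq'box, hq'⟩ := reduce_to_box hL hper q
  have hx' : ∃ x' ∈ box d L, m x' ≠ n := by
    by_cases hc : m p' = n
    · exact ⟨q', hq'box, fun hc2 => hpq (by rw [← hp', ← hq', hc, hc2])⟩
    · exact ⟨p', hp'box, hc⟩
  obtain ⟨x', hx'box, hx'ne⟩ := hx'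
  -- a small cube inside box where m ≠ n
  have hUopen : IsOpen {y : EuclideanSpace ℝ (Fin d) | m y ≠ n} := by
    have : {y : EuclideanSpace ℝ (Fin d) | m y ≠ n} = {y | m y = n}ᶜ := rfl
    rw [this]
    exact (isClosed_eq hC1.continuous continuous_const).isOpen_compl
  obtain ⟨ε, hε, hball⟩ := Metric.isOpen_iff.1 hUopen x' hx'ne
  have hFin : (Finset.univ : Finset (Fin d)).Nonempty :=
    ⟨⟨0, by omega⟩, Finset.mem_univ _⟩
  set c : ℝ := Finset.univ.inf' hFin (fun i => L - x' i) with hcdef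
  have hc : 0 < c := by
    rw [hcdef, Finset.lt_inf'_iff]
    intro i _
    have := (hx'box i).2
    linarith
  have hcle : ∀ i, c ≤ L - x' i := fun i =>
    Finset.inf'_le _ (Finset.mem_univ i)
  set r : ℝ := min (ε / (d + 1)) (c / 2) with hrdef
  have hr : 0 < r := by
    apply lt_min
    · positivity
    · linarith
  set Q : Set (EuclideanSpace ℝ (Fin d)) :=
    {y | ∀ i, y i ∈ Set.Ico (x' i) (x' i + r)} with hQdef
  have hQbox : Q ⊆ box d L := by
    intro y hy i
    have h1 := (hy i).1
    have h2 := (hy i).2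
    have h3 := (hx'box i).1
    have h4 := hcle i
    have h5 : r ≤ c / 2 := min_le_right _ _
    exact ⟨by linarith, by linarith⟩
  have hQball : Q ⊆ Metric.ball x' ε := by
    intro y hy
    rw [Metric.mem_ball, EuclideanSpace.dist_eq]
    have hterm : ∀ i, dist (y i) (x' i) ^ 2 ≤ r ^ 2 := by
      intro i
      rw [Real.dist_eq]
      have h1 := (hy i).1
      have h2 := (hy i).2
      rw [abs_of_nonneg (by linarith)]
      nlinarith
    have hsum : (∑ i, dist (y i) (x' i) ^ 2) ≤ d * r ^ 2 := by
      calc (∑ i, dist (y i) (x' i) ^ 2) ≤ ∑ _i : Fin d, r ^ 2 :=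
            Finset.sum_le_sum fun i _ => hterm i
        _ = d * r ^ 2 := by simp [Finset.sum_const, Finset.card_univ]
    have hdr : d * r ^ 2 < ε ^ 2 := by
      have h1 : r ≤ ε / (d + 1) := min_le_left _ _
      have hD : (2:ℝ) ≤ (d:ℝ) := by exact_mod_cast hd
      have hD1 : (0:ℝ) < (d:ℝ) + 1 := by linarith
      have h2 : r * ((d:ℝ) + 1) ≤ ε := by
        rw [← le_div_iff₀ hD1]
        exact h1
      have h3 := mul_le_mul h2 h2 (by positivity) hε.le
      nlinarith [sq_nonneg r, mul_pos hr hr]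
    rw [show ε = Real.sqrt (ε ^ 2) by rw [Real.sqrt_sq hε.le]]
    exact Real.sqrt_lt_sqrt (Finset.sum_nonneg fun i _ => sq_nonneg _)
      (lt_of_le_of_lt hsum hdr)
  have hQvol : volume Q = ENNReal.ofReal r ^ d := by
    have h := volume_boxlike d x' (fun i => x' i + r)
    simp only [add_sub_cancel_left] at h
    rw [hQdef, h, Finset.prod_const, Finset.card_univ, Fintype.card_fin]
  -- the integrand G ∘ m
  set g : EuclideanSpace ℝ (Fin d) → ℝ :=
    fun x => Fpot (m x) - (Fpot n + a * (m x - n)) with hgdef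
  have hFpotc : Continuous Fpot := by unfold Fpot; fun_prop
  have hgc : Continuous g := by
    rw [hgdef]
    apply Continuous.sub (hFpotc.comp hC1.continuous)
    exact continuous_const.add ((continuous_const.mul (hC1.continuous.sub continuous_const)))
  have hg_int : IntegrableOn g (box d L) volume := integrableOn_box hgc
  have hF_int : IntegrableOn (fun x => Fpot (m x)) (box d L) volume :=
    integrableOn_box (hFpotc.comp hC1.continuous)
  have hm_int : IntegrableOn m (box d L) volume := integrableOn_box hC1.continuous
  have hgrad_c : Continuous (fun x => (1/2) * ‖fderiv ℝ m x‖^2) :=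
    continuous_const.mul ((hC1.continuous_fderiv one_ne_zero).norm.pow 2)
  have hgrad_int : IntegrableOn (fun x => (1/2) * ‖fderiv ℝ m x‖^2) (box d L) volume :=
    integrableOn_box hgrad_c
  -- mean
  have hmean' : (∫ x in box d L, m x) = n * L ^ d := by
    field_simp at hmean
    linarith
  -- ∫ g > 0
  have hgnonneg : ∀ x ∈ box d L, 0 ≤ g x := by
    intro x hx
    have := hGpos (m x) (hlt x hx)
    rw [hgdef]
    dsimp only
    linarith
  have hQsupp : Q ⊆ Function.support g ∩ box d L := by
    intro y hy
    refine ⟨?_, hQbox hy⟩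
    have h1 : m y ≠ n := hball (hQball hy)
    have h2 := hGstrict (m y) (hlt y (hQbox hy)) h1
    rw [Function.mem_support, hgdef]
    dsimp only
    intro h0
    linarith
  have hvolpos : 0 < volume (Function.support g ∩ box d L) := by
    refine lt_of_lt_of_le ?_ (measure_mono hQsupp)
    rw [hQvol]
    exact ENNReal.pow_pos (ENNReal.ofReal_pos.2 hr) d
  have hIgpos : 0 < ∫ x in box d L, g x := by
    rw [setIntegral_pos_iff_support_of_nonneg_ae
      ((ae_restrict_iff' (measurable_box d L)).2 (ae_of_all _ hgnonneg)) hg_int]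
    exact hvolpos
  -- compute ∫ g
  have hvolfin : volume (box d L) < ⊤ := by
    rw [volume_box d hL]
    exact ENNReal.pow_lt_top ENNReal.ofReal_lt_top
  have hconst_integrable : ∀ c : ℝ, IntegrableOn (fun _ => c) (box d L) volume :=
    fun c => integrableOn_const hvolfin.ne
  have hlin_int : IntegrableOn (fun x => Fpot n + a * (m x - n)) (box d L) volume :=
    (hconst_integrable _).add ((hm_int.sub (hconst_integrable _)).const_mul a)
  have hint_lin : (∫ x in box d L, (Fpot n + a * (m x - n))) = L ^ d * Fpot n := by
    have e1 : (fun x => Fpot n + a * (m x - n))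
        = fun x => (Fpot n - a * n) + a * m x := by funext x; ring
    rw [e1, integral_add (hconst_integrable _) (hm_int.const_mul a), hconst_int]
    rw [integral_const_mul, hmean']
    ring
  have hint_g : (∫ x in box d L, g x)
      = (∫ x in box d L, Fpot (m x)) - L ^ d * Fpot n := by
    rw [hgdef]
    rw [integral_sub hF_int hlin_int, hint_lin]
  -- FE m decomposition and lower bound
  have hFEeq : FE d L m
      = (∫ x in box d L, (1/2) * ‖fderiv ℝ m x‖^2) + ∫ x in box d L, Fpot (m x) := by
    unfold FE
    rw [integral_add hgrad_int hF_int]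
  have hgradnn : 0 ≤ ∫ x in box d L, (1/2) * ‖fderiv ℝ m x‖^2 :=
    setIntegral_nonneg (measurable_box d L) fun x _ => by positivity
  -- fL ≤ FE of constant n
  have hAdmConst : Adm d L n (fun _ => n) := by
    refine ⟨contDiff_const, fun x i => rfl, ?_⟩
    rw [hconst_int]
    field_simp
  have hFEconst : FE d L (fun _ : EuclideanSpace ℝ (Fin d) => n) = L ^ d * Fpot n := by
    unfold FE
    have e : (fun x : EuclideanSpace ℝ (Fin d) =>
        (1/2) * ‖fderiv ℝ (fun _ : EuclideanSpace ℝ (Fin d) => n) x‖^2 + Fpot n)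
        = fun _ => Fpot n := by
      funext x
      simp [fderiv_const]
    rw [e, hconst_int]
  have hFpot_nn : ∀ s : ℝ, 0 ≤ Fpot s := fun s => by unfold Fpot; positivity
  have hfL_le : fL d L n ≤ L ^ d * Fpot n := by
    apply csInf_le
    · refine ⟨0, fun e he => ?_⟩
      obtain ⟨m', _, hFE'⟩ := he
      rw [← hFE']
      unfold FE
      exact setIntegral_nonneg (measurable_box d L) fun x _ =>
        add_nonneg (by positivity) (hFpot_nn _)
    · exact ⟨fun _ => n, hAdmConst, hFEconst⟩
  -- contradiction
  have : L ^ d * Fpot n < FE d L m := by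
    rw [hFEeq]
    have := hint_g
    linarith
  rw [hFEmin] at this
  linarith

end
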